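/- Let u, v₁, v₂ be vectors in ℝ², and for t > 0 let B_t = { s·t·u : s ∈ [0,1] } and S_i = { s·v_i : s ∈ [0,1] } for i = 1, 2. Then for every ℓ > 0 and every real c ≥ 1, the 2-dimensional Lebesgue measure satisfies vol( (S₁ ∪ S₂) + B_{cℓ} ) ≤ c · vol( (S₁ ∪ S₂) + B_ℓ ), where + denotes the Minkowski sum of sets. -/

import Mathlib

open MeasureTheory Pointwise

noncomputable section MinkScalingAux

abbrev E2 : Type := EuclideanSpace ℝ (Fin 2)

def mseg (u : E2) (t : ℝ) : Set E2 := (fun s : ℝ => s • u) '' Set.Icc 0 t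

lemma mseg_mono (u : E2) : Monotone (mseg u) := fun _ _ hab =>
  Set.image_mono (Set.Icc_subset_Icc le_rfl hab)

lemma isCompact_mseg (u : E2) (t : ℝ) : IsCompact (mseg u t) :=
  isCompact_Icc.image (continuous_id.smul continuous_const)

def FF (S : Set E2) (u : E2) (t : ℝ) : Set E2 := S + mseg u t

lemma isCompact_FF {S : Set E2} (hS : IsCompact S) (u : E2) (t : ℝ) :
    IsCompact (FF S u t) := hS.add (isCompact_mseg u t)

lemma FF_mono (S : Set E2) (u : E2) : Monotone (FF S u) := fun _ _ h =>
  Set.add_subset_add_left (mseg_mono u h)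

def gg (S : Set E2) (u : E2) (t : ℝ) : ℝ := (volume (FF S u t)).toReal

lemma gg_nonneg (S : Set E2) (u : E2) (t : ℝ) : 0 ≤ gg S u t :=
  ENNReal.toReal_nonneg

lemma gg_mono {S : Set E2} (hS : IsCompact S) (u : E2) : Monotone (gg S u) :=
  fun _ _ hab => ENNReal.toReal_mono (isCompact_FF hS u _).measure_lt_top.ne
    (measure_mono (FF_mono S u hab))

lemma key_incl (S : Set E2) (u : E2) {a b : ℝ} (hb : 0 ≤ b) (hba : b ≤ a) :
    FF S u (a + b) ⊆ FF S u a ∪ ((b • u) +ᵥ (FF S u a \ FF S u (a - b))) := by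
  intro x hx
  by_cases hxa : x ∈ FF S u a
  · exact Or.inl hxa
  right
  obtain ⟨y, hy, z, hz, rfl⟩ := hx
  obtain ⟨s, hs, rfl⟩ := hz
  have hsa : a < s := by
    by_contra h
    push_neg at h
    exact hxa ⟨y, hy, s • u, ⟨s, ⟨hs.1, h⟩, rfl⟩, rfl⟩
  have hba2 : 0 ≤ a - b := by linarith
  refine ⟨y + (s - b) • u, ⟨⟨y, hy, (s - b) • u, ⟨s - b, ⟨by linarith, by linarith [hs.2]⟩, rfl⟩, rfl⟩, ?_⟩, ?_⟩
  · rintro ⟨y', hy', z', ⟨r, hr, rfl⟩, heq⟩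
    apply hxa
    have heq' : y' + r • u = y + (s - b) • u := heq
    have hx2 : y + s • u = y' + (r + b) • u := by
      calc y + s • u = y + (s - b) • u + b • u := by
            rw [add_assoc, ← add_smul]; ring_nf
        _ = y' + r • u + b • u := by rw [heq']
        _ = y' + (r + b) • u := by rw [add_assoc, ← add_smul]
    show y + s • u ∈ FF S u a
    rw [hx2]
    exact ⟨y', hy', (r + b) • u, ⟨r + b, ⟨by linarith [hr.1], by linarith [hr.2]⟩, rfl⟩, rfl⟩
  · show b • u + (y + (s - b) • u) = y + s • u
    rw [← add_assoc, add_comm (b • u) y, add_assoc, ← add_smul]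
    ring_nf

lemma gg_midpoint {S : Set E2} (hS : IsCompact S) (u : E2) {a b : ℝ}
    (hb : 0 ≤ b) (hba : b ≤ a) :
    gg S u (a + b) + gg S u (a - b) ≤ 2 * gg S u a := by
  have hsub : FF S u (a - b) ⊆ FF S u a := FF_mono S u (by linarith)
  have hma : volume (FF S u a) ≠ ⊤ := (isCompact_FF hS u a).measure_lt_top.ne
  have hmab : volume (FF S u (a - b)) ≠ ⊤ := (isCompact_FF hS u (a - b)).measure_lt_top.ne
  have hdiff : volume (FF S u a \ FF S u (a - b))
      = volume (FF S u a) - volume (FF S u (a - b)) :=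
    measure_diff hsub (isCompact_FF hS u (a - b)).measurableSet.nullMeasurableSet hmab
  have h1 : volume (FF S u (a + b)) ≤ volume (FF S u a) + volume (FF S u a \ FF S u (a - b)) := by
    refine (measure_mono (key_incl S u hb hba)).trans ?_
    refine (measure_union_le _ _).trans ?_
    simp only [measure_vadd]
    exact le_rfl
  have hle : volume (FF S u (a - b)) ≤ volume (FF S u a) := measure_mono hsub
  have h2 : gg S u (a + b) ≤ gg S u a + (gg S u a - gg S u (a - b)) := by
    have hfin : volume (FF S u a) + volume (FF S u a \ FF S u (a - b)) ≠ ⊤ := by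
      rw [hdiff]
      exact ENNReal.add_ne_top.2 ⟨hma, (tsub_le_self.trans_lt (isCompact_FF hS u a).measure_lt_top).ne⟩
    have := ENNReal.toReal_mono hfin h1
    rw [ENNReal.toReal_add hma (by rw [hdiff]; exact (tsub_le_self.trans_lt (isCompact_FF hS u a).measure_lt_top).ne),
      hdiff, ENNReal.toReal_sub_of_le hle hma] at this
    exact this
  have h3 : gg S u (a - b) ≤ gg S u a := gg_mono hS u (by linarith)
  linarith

lemma antitone_sum_ineq {d : ℕ → ℝ} (hd : Antitone d) {m n : ℕ} (hmn : m ≤ n) :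
    (m : ℝ) * ∑ k ∈ Finset.range n, d k ≤ (n : ℝ) * ∑ k ∈ Finset.range m, d k := by
  have h1 : ∑ k ∈ Finset.range n, d k
      = ∑ k ∈ Finset.range m, d k + ∑ k ∈ Finset.Ico m n, d k := by
    rw [Finset.range_eq_Ico, ← Finset.sum_Ico_consecutive _ (Nat.zero_le m) hmn]
    rw [Finset.range_eq_Ico]
  have h2 : ∑ k ∈ Finset.Ico m n, d k ≤ ((n : ℝ) - m) * d m := by
    have := Finset.sum_le_card_nsmul (Finset.Ico m n) d (d m)
      (fun k hk => hd (Finset.mem_Ico.1 hk).1)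
    rw [Nat.card_Ico, nsmul_eq_mul] at this
    calc ∑ k ∈ Finset.Ico m n, d k ≤ ((n - m : ℕ) : ℝ) * d m := this
      _ = ((n : ℝ) - m) * d m := by rw [Nat.cast_sub hmn]
  have h3 : (m : ℝ) * d m ≤ ∑ k ∈ Finset.range m, d k := by
    have := Finset.card_nsmul_le_sum (Finset.range m) d (d m)
      (fun k hk => hd (Nat.le_of_lt (Finset.mem_range.1 hk)))
    rwa [Finset.card_range, nsmul_eq_mul] at this
  have hmn' : (m : ℝ) ≤ n := Nat.cast_le.2 hmn
  have hm0 : (0 : ℝ) ≤ m := Nat.cast_nonneg m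
  nlinarith [mul_le_mul_of_nonneg_left h2 hm0, mul_le_mul_of_nonneg_right h3 (by linarith : (0:ℝ) ≤ (n:ℝ) - m)]

lemma gg_step {S : Set E2} (hS : IsCompact S) (u : E2) {m n : ℕ} (hmn : m ≤ n)
    {h : ℝ} (hh : 0 ≤ h) :
    (m : ℝ) * gg S u ((n : ℝ) * h) ≤ (n : ℝ) * gg S u ((m : ℝ) * h) := by
  set d : ℕ → ℝ := fun k => gg S u (((k : ℝ) + 1) * h) - gg S u ((k : ℝ) * h) with hd
  have hanti : Antitone d := by
    apply antitone_nat_of_succ_le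
    intro k
    have := gg_midpoint hS u (a := ((k : ℝ) + 1) * h) (b := h) hh
      (by nlinarith [Nat.cast_nonneg (α := ℝ) k])
    have heq1 : ((k : ℝ) + 1) * h + h = (((k + 1 : ℕ) : ℝ) + 1) * h := by push_cast; ring
    have heq2 : ((k : ℝ) + 1) * h - h = (k : ℝ) * h := by ring
    have heq3 : (((k + 1 : ℕ) : ℝ)) * h = ((k : ℝ) + 1) * h := by push_cast; ring
    rw [heq1, heq2] at this
    simp only [hd, heq3]
    linarith
  have htel : ∀ N : ℕ, ∑ k ∈ Finset.range N, d k = gg S u ((N : ℝ) * h) - gg S u 0 := by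
    intro N
    have := Finset.sum_range_sub (fun k => gg S u ((k : ℝ) * h)) N
    calc ∑ k ∈ Finset.range N, d k
        = ∑ k ∈ Finset.range N, (gg S u (((k + 1 : ℕ) : ℝ) * h) - gg S u ((k : ℝ) * h)) := by
          apply Finset.sum_congr rfl; intro k _; simp only [hd]; push_cast; ring_nf
      _ = gg S u ((N : ℝ) * h) - gg S u (((0 : ℕ) : ℝ) * h) := this
      _ = gg S u ((N : ℝ) * h) - gg S u 0 := by norm_num
  have hkey := antitone_sum_ineq hanti hmn
  rw [htel m, htel n] at hkey
  have hg0 : 0 ≤ gg S u 0 := gg_nonneg S u 0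
  have hmn' : (m : ℝ) ≤ n := Nat.cast_le.2 hmn
  nlinarith

lemma gg_scale {S : Set E2} (hS : IsCompact S) (u : E2) {ℓ c : ℝ}
    (hℓ : 0 ≤ ℓ) (hc : 1 ≤ c) : gg S u (c * ℓ) ≤ c * gg S u ℓ := by
  apply le_of_forall_pos_le_add
  intro ε hε
  set m : ℕ := max 1 ⌈gg S u ℓ / ε⌉₊ with hm
  have hm1 : 1 ≤ m := le_max_left _ _
  have hm0 : (0 : ℝ) < m := by exact_mod_cast hm1
  have hmε : gg S u ℓ ≤ (m : ℝ) * ε := by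
    have h1 : gg S u ℓ / ε ≤ (⌈gg S u ℓ / ε⌉₊ : ℝ) := Nat.le_ceil _
    have h2 : ((⌈gg S u ℓ / ε⌉₊ : ℕ) : ℝ) ≤ (m : ℝ) := Nat.cast_le.2 (le_max_right _ _)
    have := (div_le_iff₀ hε).1 (h1.trans h2)
    linarith
  set n : ℕ := ⌈(m : ℝ) * c⌉₊ with hn
  have hmcn : (m : ℝ) * c ≤ (n : ℝ) := Nat.le_ceil _
  have hmn : m ≤ n := by
    have : (m : ℝ) ≤ (n : ℝ) := le_trans (by nlinarith) hmcn
    exact_mod_cast this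
  have hn0 : (0 : ℝ) < n := lt_of_lt_of_le hm0 (Nat.cast_le.2 hmn)
  set h : ℝ := c * ℓ / n with hh
  have hh0 : 0 ≤ h := div_nonneg (by nlinarith) hn0.le
  have hnh : (n : ℝ) * h = c * ℓ := by
    rw [hh]; field_simp
  have hmh : (m : ℝ) * h ≤ ℓ := by
    rw [hh, mul_div_assoc']
    rw [div_le_iff₀ hn0]
    nlinarith
  have hnlt : (n : ℝ) < (m : ℝ) * c + 1 := by
    rw [hn]
    exact Nat.ceil_lt_add_one (by nlinarith)
  have hstep := gg_step hS u hmn hh0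
  rw [hnh] at hstep
  have hmono : gg S u ((m : ℝ) * h) ≤ gg S u ℓ := gg_mono hS u hmh
  have hgl : 0 ≤ gg S u ℓ := gg_nonneg S u ℓ
  have hg2 : 0 ≤ gg S u (c * ℓ) := gg_nonneg S u _
  have : (m : ℝ) * gg S u (c * ℓ) ≤ ((m : ℝ) * c + 1) * gg S u ℓ := by
    calc (m : ℝ) * gg S u (c * ℓ) ≤ (n : ℝ) * gg S u ((m : ℝ) * h) := hstep
      _ ≤ (n : ℝ) * gg S u ℓ := by nlinarith
      _ ≤ ((m : ℝ) * c + 1) * gg S u ℓ := by nlinarith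
  have hfin : (m : ℝ) * gg S u (c * ℓ) ≤ (m : ℝ) * (c * gg S u ℓ) + (m : ℝ) * ε := by
    nlinarith
  nlinarith

lemma seg_scale {u : E2} {a : ℝ} (ha : 0 < a) :
    (fun s : ℝ => s • (a • u)) '' Set.Icc 0 1 = mseg u a := by
  unfold mseg
  ext x
  constructor
  · rintro ⟨s, ⟨hs0, hs1⟩, rfl⟩
    exact ⟨s * a, ⟨mul_nonneg hs0 ha.le, by nlinarith⟩, by simp [smul_smul]⟩
  · rintro ⟨r, ⟨hr0, hra⟩, rfl⟩
    refine ⟨r / a, ⟨div_nonneg hr0 ha.le, (div_le_one ha).2 hra⟩, ?_⟩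
    simp [smul_smul, div_mul_cancel₀ _ ha.ne']

end MinkScalingAux

theorem minkowski_sum_scaling (u v₁ v₂ : EuclideanSpace ℝ (Fin 2)) (ℓ c : ℝ)
    (hℓ : 0 < ℓ) (hc : 1 ≤ c) :
    volume ((((fun s : ℝ => s • v₁) '' Set.Icc 0 1) ∪
              ((fun s : ℝ => s • v₂) '' Set.Icc 0 1)) +
            ((fun s : ℝ => s • ((c * ℓ) • u)) '' Set.Icc 0 1))
      ≤ ENNReal.ofReal c *
        volume ((((fun s : ℝ => s • v₁) '' Set.Icc 0 1) ∪
                  ((fun s : ℝ => s • v₂) '' Set.Icc 0 1)) +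
                ((fun s : ℝ => s • (ℓ • u)) '' Set.Icc 0 1)) := by
  set S : Set E2 := ((fun s : ℝ => s • v₁) '' Set.Icc 0 1) ∪
    ((fun s : ℝ => s • v₂) '' Set.Icc 0 1) with hSdef
  have hS : IsCompact S :=
    (isCompact_Icc.image (continuous_id.smul continuous_const)).union
      (isCompact_Icc.image (continuous_id.smul continuous_const))
  have hcl : 0 < c * ℓ := by nlinarith
  rw [seg_scale hcl, seg_scale hℓ]
  show volume (FF S u (c * ℓ)) ≤ ENNReal.ofReal c * volume (FF S u ℓ)
  have h1 : volume (FF S u (c * ℓ)) = ENNReal.ofReal (gg S u (c * ℓ)) :=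
    (ENNReal.ofReal_toReal (isCompact_FF hS u _).measure_lt_top.ne).symm
  have h2 : volume (FF S u ℓ) = ENNReal.ofReal (gg S u ℓ) :=
    (ENNReal.ofReal_toReal (isCompact_FF hS u _).measure_lt_top.ne).symm
  rw [h1, h2, ← ENNReal.ofReal_mul (by linarith : (0:ℝ) ≤ c)]
  exact ENNReal.ofReal_le_ofReal (gg_scale hS u hℓ.le hc)
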